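/- Let T and P be p-strings, m = |P|, and let i be a position with 1 ≤ i and i + m − 1 ≤ |T|. Then T[i : i+m−1] ≈ P if and only if prev(P) equals the length-m prefix of prev(T[i:]), where T[i:] is the suffix of T starting at position i. (Hence the p-beginning positions of P in T are exactly the positions i such that prev(P) is a prefix of prev(T[i:]).) -/

import Mathlib

/-- p-match: a bijection on `Σ ∪ Π` (here `S ⊕ P`, static chars `Sum.inl`) which is the
identity on static characters and maps `y` onto `x` positionwise. -/
def PMatch {S P : Type*} (x y : List (S ⊕ P)) : Prop :=
  ∃ f : (S ⊕ P) → (S ⊕ P), Function.Bijective f ∧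
    (∀ s : S, f (Sum.inl s) = Sum.inl s) ∧ x = y.map f

/-- The `i`-th entry (0-based) of the previous encoding: a static character stays itself;
a parameterized character is replaced by the distance to its previous occurrence,
or by `0` if it has no previous occurrence. -/
def prevEntry {S P : Type*} [DecidableEq S] [DecidableEq P]
    (w : List (S ⊕ P)) (i : ℕ) : S ⊕ ℕ :=
  match w[i]? with
  | some (Sum.inl s) => Sum.inl s
  | _ => Sum.inr (i - (WithBot.unbotD i ((Finset.range i).filter fun j => w[j]? = w[i]?).max))

/-- The previous encoding `prev(w)`, a string of length `|w|` over `Σ ∪ ℕ`. -/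
def prev {S P : Type*} [DecidableEq S] [DecidableEq P]
    (w : List (S ⊕ P)) : List (S ⊕ ℕ) :=
  List.ofFn fun i : Fin w.length => prevEntry w i

section Helpers

open Sum

variable {S P : Type*} [DecidableEq S] [DecidableEq P]

lemma mem_of_getElem?' {α : Type*} {l : List α} {n : ℕ} {a : α} (h : l[n]? = some a) :
    a ∈ l := by
  obtain ⟨hn, rfl⟩ := List.getElem?_eq_some_iff.mp h
  exact List.getElem_mem hn

lemma prev_length (w : List (S ⊕ P)) : (prev w).length = w.length := by simp [prev]

lemma prev_getElem? (w : List (S ⊕ P)) (n : ℕ) (h : n < w.length) :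
    (prev w)[n]? = some (prevEntry w n) := by
  simp [prev, List.getElem?_ofFn, List.ofFnNthVal, h]

lemma prevEntry_of_inl (w : List (S ⊕ P)) (i : ℕ) (s : S) (h : w[i]? = some (Sum.inl s)) :
    prevEntry w i = Sum.inl s := by
  unfold prevEntry
  rw [h]

lemma prevEntry_of_inr (w : List (S ⊕ P)) (i : ℕ) (p : P) (h : w[i]? = some (Sum.inr p)) :
    prevEntry w i =
      Sum.inr (i - (WithBot.unbotD i ((Finset.range i).filter fun j => w[j]? = w[i]?).max)) := by
  unfold prevEntry
  rw [h]

lemma prevEntry_eq_inl_iff (w : List (S ⊕ P)) (i : ℕ) (s : S) :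
    prevEntry w i = Sum.inl s ↔ w[i]? = some (Sum.inl s) := by
  constructor
  · intro h
    rcases hw : w[i]? with _ | (s' | p)
    · unfold prevEntry at h; rw [hw] at h; exact absurd h (by simp)
    · rw [prevEntry_of_inl w i s' hw] at h
      obtain rfl : s' = s := by simpa using h
      rfl
    · rw [prevEntry_of_inr w i p hw] at h; exact absurd h (by simp)
  · exact prevEntry_of_inl w i s

lemma prevEntry_congr {w w' : List (S ⊕ P)} {n : ℕ} (h : ∀ j ≤ n, w[j]? = w'[j]?) :
    prevEntry w n = prevEntry w' n := by
  have hfil : ((Finset.range n).filter fun j => w[j]? = w[n]?)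
      = ((Finset.range n).filter fun j => w'[j]? = w'[n]?) := by
    apply Finset.filter_congr
    intro j hj
    rw [h j (Finset.mem_range.1 hj).le, h n le_rfl]
  unfold prevEntry
  rw [hfil, h n le_rfl]

lemma prev_take (w : List (S ⊕ P)) (m : ℕ) : prev (w.take m) = (prev w).take m := by
  apply List.ext_getElem?
  intro n
  by_cases hn : n < m ∧ n < w.length
  · have hn1 : n < (w.take m).length := by simp [hn.1, hn.2]
    rw [prev_getElem? _ _ hn1, List.getElem?_take, if_pos hn.1, prev_getElem? _ _ hn.2]
    congr 1
    apply prevEntry_congr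
    intro j hj
    rw [List.getElem?_take, if_pos (lt_of_le_of_lt hj hn.1)]
  · rw [List.getElem?_eq_none, List.getElem?_eq_none]
    · rcases not_and_or.mp hn with h | h
      · rw [List.length_take]; push_neg at h; omega
      · rw [List.length_take, prev_length]; push_neg at h; omega
    · rw [prev_length, List.length_take]
      rcases not_and_or.mp hn with h | h <;> push_neg at h <;> omega

/-- The crucial structural fact: if two words have equal `prev` encodings (entrywise),
then positions carry equal letters in one word iff they do in the other. -/
lemma key_of {x y : List (S ⊕ P)} (hl : x.length = y.length)
    (he : ∀ i < x.length, prevEntry x i = prevEntry y i) :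
    ∀ i j : ℕ, j ≤ i → (x[j]? = x[i]? ↔ y[j]? = y[i]?) := by
  have hinl : ∀ (i : ℕ) (s : S), x[i]? = some (inl s) ↔ y[i]? = some (inl s) := by
    intro i s
    by_cases hi : i < x.length
    · rw [← prevEntry_eq_inl_iff, ← prevEntry_eq_inl_iff, he i hi]
    · rw [List.getElem?_eq_none (l := x) (by omega), List.getElem?_eq_none (l := y) (by omega)]
  intro i
  induction i using Nat.strong_induction_on with
  | _ i IH =>
    intro j hj
    rcases eq_or_lt_of_le hj with rfl | hji
    · simp
    by_cases hi : i < x.length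
    case neg =>
      rw [List.getElem?_eq_none (l := x) (i := i) (by omega),
        List.getElem?_eq_none (l := y) (i := i) (by omega)]
      constructor <;> intro h <;> rw [List.getElem?_eq_none_iff] at h ⊢ <;> omega
    case pos =>
      obtain ⟨c, hxi⟩ : ∃ c, x[i]? = some c := ⟨_, List.getElem?_eq_getElem hi⟩
      rcases c with s | p
      · have hyi : y[i]? = some (inl s) := (hinl i s).1 hxi
        rw [hxi, hyi]
        exact hinl j s
      · obtain ⟨c', hyi'⟩ : ∃ c', y[i]? = some c' :=
          ⟨_, List.getElem?_eq_getElem (by omega)⟩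
        obtain ⟨q, hyi⟩ : ∃ q, y[i]? = some (inr q) := by
          rcases c' with s' | q'
          · have := (hinl i s').2 hyi'
            rw [hxi] at this; exact absurd this (by simp)
          · exact ⟨q', hyi'⟩
        have hent := he i hi
        rw [prevEntry_of_inr x i p hxi, prevEntry_of_inr y i q hyi, Sum.inr.injEq] at hent
        set Fx := (Finset.range i).filter (fun j => x[j]? = x[i]?) with hFxdef
        set Fy := (Finset.range i).filter (fun j => y[j]? = y[i]?) with hFydef
        have memFx : ∀ j, j ∈ Fx ↔ (j < i ∧ x[j]? = x[i]?) := by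
          intro j; rw [hFxdef, Finset.mem_filter, Finset.mem_range]
        have memFy : ∀ j, j ∈ Fy ↔ (j < i ∧ y[j]? = y[i]?) := by
          intro j; rw [hFydef, Finset.mem_filter, Finset.mem_range]
        by_cases hFx : Fx = ∅
        · have hvx : WithBot.unbotD i Fx.max = i := by rw [hFx, Finset.max_empty, WithBot.unbotD_bot]
          by_cases hFy : Fy = ∅
          · constructor <;> intro h <;> exfalso
            · have : j ∈ Fx := (memFx j).2 ⟨hji, h⟩
              rw [hFx] at this; exact absurd this (Finset.notMem_empty j)
            · have : j ∈ Fy := (memFy j).2 ⟨hji, h⟩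
              rw [hFy] at this; exact absurd this (Finset.notMem_empty j)
          · exfalso
            obtain ⟨ky, hky⟩ := Finset.max_of_nonempty (Finset.nonempty_iff_ne_empty.2 hFy)
            have hkym := (memFy ky).1 (Finset.mem_of_max hky)
            rw [hvx, hky, WithBot.unbotD_coe] at hent
            omega
        · obtain ⟨kx, hkx⟩ := Finset.max_of_nonempty (Finset.nonempty_iff_ne_empty.2 hFx)
          have hkxm := (memFx kx).1 (Finset.mem_of_max hkx)
          by_cases hFy : Fy = ∅
          · exfalso
            have hvy : WithBot.unbotD i Fy.max = i := by rw [hFy, Finset.max_empty, WithBot.unbotD_bot]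
            rw [hvy, hkx, WithBot.unbotD_coe] at hent
            omega
          · obtain ⟨ky, hky⟩ := Finset.max_of_nonempty (Finset.nonempty_iff_ne_empty.2 hFy)
            have hkym := (memFy ky).1 (Finset.mem_of_max hky)
            rw [hkx, hky, WithBot.unbotD_coe, WithBot.unbotD_coe] at hent
            have hkk : kx = ky := by omega
            subst hkk
            have hIH := IH kx hkxm.1
            constructor
            · intro h
              have hjFx : j ∈ Fx := (memFx j).2 ⟨hji, h⟩
              have hjk : j ≤ kx := by
                have := Finset.le_max hjFx
                rw [hkx] at this
                exact_mod_cast this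
              have hx' : x[j]? = x[kx]? := by rw [h, hkxm.2]
              have hy' : y[j]? = y[kx]? := (hIH j hjk).1 hx'
              rw [hy', hkym.2]
            · intro h
              have hjFy : j ∈ Fy := (memFy j).2 ⟨hji, h⟩
              have hjk : j ≤ kx := by
                have := Finset.le_max hjFy
                rw [hky] at this
                exact_mod_cast this
              have hy' : y[j]? = y[kx]? := by rw [h, hkym.2]
              have hx' : x[j]? = x[kx]? := (hIH j hjk).2 hy'
              rw [hx', hkxm.2]

lemma key_of' {x y : List (S ⊕ P)} (hl : x.length = y.length)
    (he : ∀ i < x.length, prevEntry x i = prevEntry y i) :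
    ∀ i j : ℕ, (x[j]? = x[i]? ↔ y[j]? = y[i]?) := by
  intro i j
  rcases le_total j i with h | h
  · exact key_of hl he i j h
  · rw [eq_comm (a := x[j]?), eq_comm (a := y[j]?)]
    exact key_of hl he j i h

lemma inl_iff_of {x y : List (S ⊕ P)} (hl : x.length = y.length)
    (he : ∀ i < x.length, prevEntry x i = prevEntry y i) (i : ℕ) (s : S) :
    x[i]? = some (Sum.inl s) ↔ y[i]? = some (Sum.inl s) := by
  by_cases hi : i < x.length
  · rw [← prevEntry_eq_inl_iff, ← prevEntry_eq_inl_iff, he i hi]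
  · rw [List.getElem?_eq_none (l := x) (by omega), List.getElem?_eq_none (l := y) (by omega)]

lemma prev_eq_entries {x y : List (S ⊕ P)} (h : prev x = prev y) :
    x.length = y.length ∧ ∀ i < x.length, prevEntry x i = prevEntry y i := by
  have hl : x.length = y.length := by
    have := congrArg List.length h
    rwa [prev_length, prev_length] at this
  refine ⟨hl, fun i hi => ?_⟩
  have := congrArg (fun l => l[i]?) h
  rw [prev_getElem? _ _ hi, prev_getElem? _ _ (by omega)] at this
  exact Option.some_injective _ this

/-- Backward direction: equal `prev` encodings yield a p-match. -/
lemma pmatch_of_prev_eq {x y : List (S ⊕ P)} (h : prev x = prev y) : PMatch x y := by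
  classical
  obtain ⟨hl, he⟩ := prev_eq_entries h
  have key := key_of' hl he
  have hinl := inl_iff_of hl he
  -- the set of parameter letters occurring in y and in x
  set s : Set P := {p | Sum.inr p ∈ y} with hsdef
  set t : Set P := {q | Sum.inr q ∈ x} with htdef
  have hsfin : s.Finite := Set.Finite.preimage (Sum.inr_injective.injOn)
    (y.finite_toSet)
  have htfin : t.Finite := Set.Finite.preimage (Sum.inr_injective.injOn)
    (x.finite_toSet)
  -- choose an occurrence position for each parameter of y
  have hexy : ∀ b : s, ∃ n : ℕ, y[n]? = some (Sum.inr b.1) := fun b =>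
    List.mem_iff_getElem?.mp b.2
  choose iy iyspec using hexy
  -- for each parameter in y, the corresponding letter of x at that occurrence
  have hex : ∀ b : s, ∃ q : P, x[iy b]? = some (Sum.inr q) := by
    intro b
    have hlt : iy b < y.length := (List.getElem?_eq_some_iff.mp (iyspec b)).1
    obtain ⟨c, hc⟩ : ∃ c, x[iy b]? = some c :=
      ⟨_, List.getElem?_eq_getElem (by omega)⟩
    rcases c with s' | q
    · have := (hinl _ s').1 hc
      rw [iyspec b] at this; exact absurd this (by simp)
    · exact ⟨q, hc⟩
  choose e espec using hex
  have einj : Function.Injective e := by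
    intro b1 b2 hee
    have h1 := espec b1
    have h2 := espec b2
    rw [hee] at h1
    have hx12 : x[iy b1]? = x[iy b2]? := by rw [h1, h2]
    have hy12 := (key (iy b2) (iy b1)).1 hx12
    rw [iyspec b1, iyspec b2] at hy12
    exact Subtype.ext (Sum.inr_injective (Option.some_injective _ hy12))
  have erange : Set.range e = t := by
    ext q
    constructor
    · rintro ⟨b, rfl⟩
      exact mem_of_getElem?' (espec b)
    · intro hq
      obtain ⟨n, hn⟩ : ∃ n : ℕ, x[n]? = some (Sum.inr q) := List.mem_iff_getElem?.mp hq
      have hnlt : n < x.length := (List.getElem?_eq_some_iff.mp hn).1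
      obtain ⟨c, hc⟩ : ∃ c, y[n]? = some c := ⟨_, List.getElem?_eq_getElem (by omega)⟩
      obtain ⟨b, hb⟩ : ∃ b : P, y[n]? = some (Sum.inr b) := by
        rcases c with s' | b
        · have := (hinl _ s').2 hc
          rw [hn] at this; exact absurd this (by simp)
        · exact ⟨b, hc⟩
      have hbmem : b ∈ s := mem_of_getElem?' hb
      refine ⟨⟨b, hbmem⟩, ?_⟩
      have hy12 : y[iy ⟨b, hbmem⟩]? = y[n]? := by rw [hb, iyspec ⟨b, hbmem⟩]
      have hx12 := (key n (iy ⟨b, hbmem⟩)).2 hy12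
      have := espec ⟨b, hbmem⟩
      rw [hx12, hn] at this
      exact (Sum.inr_injective (Option.some_injective _ this)).symm
  -- extend the bijection s ≃ t to a permutation of P
  have hst : Cardinal.mk s = Cardinal.mk t := by
    rw [← erange]
    exact Cardinal.mk_congr (Equiv.ofInjective e einj)
  have hcompl : Nonempty ((↥sᶜ) ≃ ↥(Set.range e)ᶜ) := by
    rw [erange]
    apply Cardinal.eq.mp
    cases finite_or_infinite P
    · exact Cardinal.mk_compl_eq_mk_compl_finite_same hst
    · rw [Cardinal.mk_compl_of_infinite s (lt_of_lt_of_le hsfin.lt_aleph0 (Cardinal.aleph0_le_mk P)),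
        Cardinal.mk_compl_of_infinite t (lt_of_lt_of_le htfin.lt_aleph0 (Cardinal.aleph0_le_mk P))]
  obtain ⟨g, hg⟩ := Cardinal.extend_function (⟨e, einj⟩ : s ↪ P) (by exact hcompl)
  refine ⟨fun c => (Equiv.sumCongr (Equiv.refl S) g) c, (Equiv.sumCongr (Equiv.refl S) g).bijective,
    fun s => rfl, ?_⟩
  apply List.ext_getElem?
  intro n
  rw [List.getElem?_map]
  by_cases hn : n < y.length
  · obtain ⟨c, hc⟩ : ∃ c, y[n]? = some c := ⟨_, List.getElem?_eq_getElem hn⟩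
    rw [hc]
    rcases c with s' | b
    · simpa using (hinl n s').2 hc
    · have hbmem : b ∈ s := mem_of_getElem?' hc
      have hy12 : y[iy ⟨b, hbmem⟩]? = y[n]? := by rw [hc, iyspec ⟨b, hbmem⟩]
      have hx12 := (key n (iy ⟨b, hbmem⟩)).2 hy12
      have hxn : x[n]? = some (Sum.inr (e ⟨b, hbmem⟩)) := by
        rw [← hx12]; exact espec ⟨b, hbmem⟩
      rw [hxn]
      simp only [Option.map_some, Equiv.sumCongr_apply, Sum.map_inr]
      rw [hg ⟨b, hbmem⟩]
      rfl
  · rw [List.getElem?_eq_none (l := y) (by omega), List.getElem?_eq_none (l := x) (by omega)]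
    rfl

/-- Forward direction: a p-match yields equal `prev` encodings. -/
lemma prev_eq_of_pmatch {x y : List (S ⊕ P)} (h : PMatch x y) : prev x = prev y := by
  obtain ⟨f, hbij, hfix, rfl⟩ := h
  have hinj := hbij.1
  have hmapinj : Function.Injective (Option.map f) := Option.map_injective hinj
  have hget : ∀ j : ℕ, (y.map f)[j]? = Option.map f y[j]? := fun j => List.getElem?_map
  have hent : ∀ n < y.length, prevEntry (y.map f) n = prevEntry y n := by
    intro n hn
    obtain ⟨c, hc⟩ : ∃ c, y[n]? = some c := ⟨_, List.getElem?_eq_getElem hn⟩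
    have hfc : (y.map f)[n]? = some (f c) := by rw [hget n, hc]; rfl
    have hfil : ((Finset.range n).filter fun j => (y.map f)[j]? = (y.map f)[n]?)
        = ((Finset.range n).filter fun j => y[j]? = y[n]?) := by
      apply Finset.filter_congr
      intro j _
      rw [hget j, hget n]
      exact hmapinj.eq_iff
    rcases c with s' | p
    · rw [prevEntry_of_inl y n s' hc, prevEntry_of_inl (y.map f) n s'
        (by rw [hfc, hfix s'])]
    · obtain ⟨q, hq⟩ : ∃ q, f (Sum.inr p) = Sum.inr q := by
        rcases hfp : f (Sum.inr p) with s' | q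
        · exact absurd (hinj (hfp.trans (hfix s').symm)) (by simp)
        · exact ⟨q, rfl⟩
      rw [prevEntry_of_inr y n p hc, prevEntry_of_inr (y.map f) n q (by rw [hfc, hq]), hfil]
  apply List.ext_getElem?
  intro n
  by_cases hn : n < y.length
  · rw [prev_getElem? _ _ (by simpa using hn), prev_getElem? _ _ hn, hent n hn]
  · rw [List.getElem?_eq_none (by rw [prev_length]; simpa using hn),
      List.getElem?_eq_none (by rw [prev_length]; omega)]

lemma pmatch_iff_prev_eq {x y : List (S ⊕ P)} : PMatch x y ↔ prev x = prev y :=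
  ⟨prev_eq_of_pmatch, pmatch_of_prev_eq⟩

end Helpers

/-- let `T` and `pat` be p-strings, `m = |pat|`, and `i` a (1-based)
position with `1 ≤ i` and `i + m − 1 ≤ |T|`.  Then the substring
`T[i : i+m−1] = (T.drop (i-1)).take m` p-matches `pat` if and only if `prev(pat)`
equals the length-`m` prefix of `prev(T[i:])`, where `T[i:] = T.drop (i-1)` is the
suffix of `T` starting at position `i`. -/
theorem pmatch_iff_prev_prefix {S P : Type*} [DecidableEq S] [DecidableEq P]
    (T pat : List (S ⊕ P)) (i : ℕ) (h1 : 1 ≤ i)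
    (h2 : i + pat.length - 1 ≤ T.length) :
    PMatch ((T.drop (i - 1)).take pat.length) pat ↔
      prev pat = (prev (T.drop (i - 1))).take pat.length := by
  rw [pmatch_iff_prev_eq, ← prev_take, eq_comm]
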